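/- arXiv:1110.3863 — 6 statements merged into one kernel-verified Lean document; each statement's English description precedes it below -/
import Mathlib

section
/- Let L be a number field and let x ∈ 𝓞_L. Suppose Γ is a subgroup of SL(2, 𝓞_L) such that the matrix μ = [[1, x], [0, 1]] belongs to Γ, Γ equals the normal closure of {μ} in Γ (μ normally generates Γ), and Γ contains at least one matrix whose lower-left entry is nonzero. Then x is a unit of 𝓞_L (equivalently, x⁻¹ is an algebraic integer). -/
open NumberField

lemma aux_mul_entry {R : Type*} [CommRing R] (A B : Matrix.SpecialLinearGroup (Fin 2) R) :
    ((A * B : Matrix.SpecialLinearGroup (Fin 2) R) : Matrix (Fin 2) (Fin 2) R) 1 0 =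
      (A : Matrix (Fin 2) (Fin 2) R) 1 0 * (B : Matrix (Fin 2) (Fin 2) R) 0 0 +
      (A : Matrix (Fin 2) (Fin 2) R) 1 1 * (B : Matrix (Fin 2) (Fin 2) R) 1 0 := by
  simp [Matrix.SpecialLinearGroup.coe_mul, Matrix.mul_apply, Fin.sum_univ_two]

lemma aux_inv_entry {R : Type*} [CommRing R] (A : Matrix.SpecialLinearGroup (Fin 2) R) :
    ((A⁻¹ : Matrix.SpecialLinearGroup (Fin 2) R) : Matrix (Fin 2) (Fin 2) R) 1 0 =
      -((A : Matrix (Fin 2) (Fin 2) R) 1 0) := by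
  rw [Matrix.SpecialLinearGroup.coe_inv, Matrix.adjugate_fin_two]
  simp

lemma aux_one_entry {R : Type*} [CommRing R] :
    ((1 : Matrix.SpecialLinearGroup (Fin 2) R) : Matrix (Fin 2) (Fin 2) R) 1 0 = 0 := by
  simp

lemma aux_conj_entry {R : Type*} [CommRing R] (c μ : Matrix.SpecialLinearGroup (Fin 2) R)
    (x : R) (hμ : (μ : Matrix (Fin 2) (Fin 2) R) = !![1, x; 0, 1]) :
    ((c * μ * c⁻¹ : Matrix.SpecialLinearGroup (Fin 2) R) : Matrix (Fin 2) (Fin 2) R) 1 0 =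
      -((c : Matrix (Fin 2) (Fin 2) R) 1 0 * ((c : Matrix (Fin 2) (Fin 2) R) 1 0 * x)) := by
  simp only [Matrix.SpecialLinearGroup.coe_mul, Matrix.SpecialLinearGroup.coe_inv,
    Matrix.adjugate_fin_two, Matrix.mul_apply, Fin.sum_univ_two, hμ]
  simp [Matrix.mul_apply, Fin.sum_univ_two]
  ring

/-- The subgroup of `SL(2,R)` of matrices whose lower-left entry lies in an ideal `I`. -/
def lowerLeftIn {R : Type*} [CommRing R] (I : Ideal R) :
    Subgroup (Matrix.SpecialLinearGroup (Fin 2) R) where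
  carrier := {g | (g : Matrix (Fin 2) (Fin 2) R) 1 0 ∈ I}
  one_mem' := by
    show ((1 : Matrix.SpecialLinearGroup (Fin 2) R) : Matrix (Fin 2) (Fin 2) R) 1 0 ∈ I
    rw [aux_one_entry]; exact I.zero_mem
  mul_mem' := by
    intro A B hA hB
    show ((A * B : Matrix.SpecialLinearGroup (Fin 2) R) : Matrix (Fin 2) (Fin 2) R) 1 0 ∈ I
    rw [aux_mul_entry]
    exact I.add_mem (I.mul_mem_right _ hA) (I.mul_mem_left _ hB)
  inv_mem' := by
    intro A hA
    show ((A⁻¹ : Matrix.SpecialLinearGroup (Fin 2) R) : Matrix (Fin 2) (Fin 2) R) 1 0 ∈ I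
    rw [aux_inv_entry]
    exact neg_mem hA

lemma mem_lowerLeftIn {R : Type*} [CommRing R] (I : Ideal R)
    (g : Matrix.SpecialLinearGroup (Fin 2) R) :
    g ∈ lowerLeftIn I ↔ (g : Matrix (Fin 2) (Fin 2) R) 1 0 ∈ I := Iff.rfl

/-- Let `L` be a number field and `x ∈ 𝓞 L`. If `Γ ≤ SL(2, 𝓞 L)` contains
`μ = !![1, x; 0, 1]`, `μ` normally generates `Γ`, and `Γ` contains a matrix with nonzero
lower-left entry, then `x` is a unit of `𝓞 L`. -/
theorem stmt_0 (L : Type*) [Field L] [NumberField L] (x : 𝓞 L)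
    (Γ : Subgroup (Matrix.SpecialLinearGroup (Fin 2) (𝓞 L)))
    (μ : Matrix.SpecialLinearGroup (Fin 2) (𝓞 L))
    (hμ : (μ : Matrix (Fin 2) (Fin 2) (𝓞 L)) = !![1, x; 0, 1])
    (hμΓ : μ ∈ Γ)
    (hgen : Subgroup.normalClosure ({⟨μ, hμΓ⟩} : Set Γ) = ⊤)
    (hc : ∃ g ∈ Γ, (g : Matrix (Fin 2) (Fin 2) (𝓞 L)) 1 0 ≠ 0) :
    IsUnit x := by
  by_contra hx
  obtain ⟨m, hm, hxm⟩ : ∃ m : Ideal (𝓞 L), m.IsMaximal ∧ x ∈ m := by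
    obtain ⟨m, hm, hle⟩ := (Ideal.span {x}).exists_le_maximal (by
      simpa [Ideal.span_singleton_eq_top] using hx)
    exact ⟨m, hm, hle (Ideal.mem_span_singleton_self x)⟩
  have key : ∀ k : ℕ, ∀ g ∈ Γ, (g : Matrix (Fin 2) (Fin 2) (𝓞 L)) 1 0 ∈ m ^ k := by
    intro k
    induction k with
    | zero =>
      intro g hg
      rw [pow_zero, Ideal.one_eq_top]
      exact Submodule.mem_top
    | succ k ih =>
      intro g hg
      have hmem : (⟨g, hg⟩ : Γ) ∈ Subgroup.normalClosure ({⟨μ, hμΓ⟩} : Set Γ) := by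
        rw [hgen]; trivial
      have hle : Subgroup.normalClosure ({⟨μ, hμΓ⟩} : Set Γ) ≤
          Subgroup.comap Γ.subtype (lowerLeftIn (m ^ (k + 1))) := by
        apply (Subgroup.closure_le _).mpr
        intro y hy
        obtain ⟨a, ha, hconj⟩ := Group.mem_conjugatesOfSet_iff.mp hy
        obtain ⟨c, rfl⟩ := isConj_iff.mp hconj
        rw [Set.mem_singleton_iff] at ha
        subst ha
        rw [SetLike.mem_coe, Subgroup.mem_comap, mem_lowerLeftIn]
        have hcne : Γ.subtype (c * ⟨μ, hμΓ⟩ * c⁻¹) =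
            (c : Matrix.SpecialLinearGroup (Fin 2) (𝓞 L)) * μ *
              (c : Matrix.SpecialLinearGroup (Fin 2) (𝓞 L))⁻¹ := by
          rfl
        rw [hcne, aux_conj_entry _ _ _ hμ, pow_succ]
        exact neg_mem (Ideal.mul_mem_mul (ih _ c.2) (m.mul_mem_left _ hxm))
      have := hle hmem
      rw [Subgroup.mem_comap, mem_lowerLeftIn] at this
      exact this
  obtain ⟨g, hg, hg10⟩ := hc
  apply hg10
  have hbot : (⨅ k : ℕ, m ^ k) = ⊥ :=
    Ideal.iInf_pow_eq_bot_of_isDomain m hm.ne_top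
  have hmem : (g : Matrix (Fin 2) (Fin 2) (𝓞 L)) 1 0 ∈ (⨅ k : ℕ, m ^ k) :=
    Ideal.mem_iInf.mpr fun k => key k g hg
  rw [hbot] at hmem
  exact hmem
end

section
/- Let 𝔸 be the ring of all algebraic integers, i.e., the integral closure of ℤ in ℂ. For every matrix M ∈ SL(2, 𝔸) with trace M = 2, there exists h ∈ SL(2, 𝔸) such that hMh⁻¹ is upper triangular, i.e., the lower-left entry of hMh⁻¹ is 0. -/
open NumberField IntermediateField Ideal nonZeroDivisors

noncomputable abbrev AA := integralClosure ℤ ℂ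

set_option maxHeartbeats 2000000 in
set_option synthInstance.maxHeartbeats 400000 in
lemma bezout_pair (s r : AA) (hs : s ≠ 0) :
    ∃ (x y p q : AA) (γ : ℂ), γ ≠ 0 ∧ p * x + q * y = 1 ∧
      (x : ℂ) * γ = s ∧ (y : ℂ) * γ = r := by
  classical
  set K : IntermediateField ℚ ℂ := IntermediateField.adjoin ℚ {(s : ℂ), (r : ℂ)} with hK
  have hsK : (s : ℂ) ∈ K := IntermediateField.subset_adjoin ℚ _ (by simp)
  have hrK : (r : ℂ) ∈ K := IntermediateField.subset_adjoin ℚ _ (by simp)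
  have hints : IsIntegral ℤ (s : ℂ) := s.2
  have hintr : IsIntegral ℤ (r : ℂ) := r.2
  haveI : FiniteDimensional ℚ K := by
    apply IntermediateField.finiteDimensional_adjoin
    rintro x hx
    rcases hx with h | h
    · exact h ▸ hints.tower_top
    · exact (Set.mem_singleton_iff.mp h) ▸ hintr.tower_top
  haveI : NumberField K := ⟨⟩
  -- elements of the ring of integers of K
  have hintsK : IsIntegral ℤ (⟨(s : ℂ), hsK⟩ : K) := by
    rwa [← isIntegral_algebraMap_iff (algebraMap K ℂ).injective]
  have hintrK : IsIntegral ℤ (⟨(r : ℂ), hrK⟩ : K) := by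
    rwa [← isIntegral_algebraMap_iff (algebraMap K ℂ).injective]
  set sO : 𝓞 K := ⟨⟨(s : ℂ), hsK⟩, hintsK⟩ with hsO
  set rO : 𝓞 K := ⟨⟨(r : ℂ), hrK⟩, hintrK⟩ with hrO
  set I : Ideal (𝓞 K) := Ideal.span {sO, rO} with hIdef
  have hsO0 : sO ≠ 0 := by
    intro h
    apply hs
    have h1 : ((sO : K) : ℂ) = 0 := by rw [h]; simp
    exact Subtype.ext h1
  have hI : I ∈ (Ideal (𝓞 K))⁰ := by
    rw [mem_nonZeroDivisors_iff_ne_zero]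
    intro h
    exact hsO0 (Ideal.span_eq_bot.mp h sO (by simp))
  set n : ℕ := Fintype.card (ClassGroup (𝓞 K)) with hn
  have hnpos : 0 < n := Fintype.card_pos
  have hprin : (I ^ n).IsPrincipal := by
    have h1 : ClassGroup.mk0 (⟨I, hI⟩ ^ n) = 1 := by
      rw [map_pow]; exact pow_card_eq_one
    have h2 : (⟨I, hI⟩ : (Ideal (𝓞 K))⁰) ^ n = ⟨I ^ n, pow_mem hI n⟩ := Subtype.ext rfl
    rw [h2] at h1
    exact (ClassGroup.mk0_eq_one_iff _).mp h1
  obtain ⟨g, hg⟩ := hprin.principal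
  rw [Ideal.submodule_span_eq] at hg
  -- g is nonzero
  have hsn : sO ^ n ∈ I ^ n := Ideal.pow_mem_pow (Ideal.subset_span (by simp)) n
  have hg0 : g ≠ 0 := by
    rintro rfl
    apply hsO0
    have h4 : sO ^ n ∈ Ideal.span ({0} : Set (𝓞 K)) := hg ▸ hsn
    rw [Ideal.span_singleton_eq_bot.mpr rfl] at h4
    exact pow_eq_zero_iff hnpos.ne' |>.mp h4
  have hgC : algebraMap K ℂ (g : K) ≠ 0 := by
    intro h
    exact hg0 (Subtype.ext ((algebraMap K ℂ).injective (h.trans (map_zero _).symm)))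
  -- an n-th root of g in ℂ
  obtain ⟨γ, hγ⟩ := IsAlgClosed.exists_pow_nat_eq (algebraMap K ℂ (g : K)) hnpos
  have hγ0 : γ ≠ 0 := by
    rintro rfl
    rw [zero_pow hnpos.ne'] at hγ
    exact hg0 (by
      have : (g : K) = 0 := (algebraMap K ℂ).injective (by simpa using hγ.symm)
      exact Subtype.ext this)
  have hγint : IsIntegral ℤ γ :=
    IsIntegral.of_pow hnpos (by rw [hγ]; exact map_isIntegral_int (algebraMap K ℂ) g.2)
  set γA : AA := ⟨γ, hγint⟩ with hγA
  have hγA0 : γA ≠ 0 := fun h => hγ0 (Subtype.ext_iff.mp h)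
  -- the quotients s/γ and r/γ are algebraic integers
  have quot_int : ∀ w : 𝓞 K, w ∈ I → IsIntegral ℤ ((algebraMap K ℂ (w : K)) / γ) := by
    intro w hw
    have hwn : w ^ n ∈ Ideal.span {g} := by rw [← hg]; exact Ideal.pow_mem_pow hw n
    obtain ⟨u, hu⟩ := Ideal.mem_span_singleton.mp hwn
    apply IsIntegral.of_pow hnpos
    have hKpow : ((w : K)) ^ n = (g : K) * (u : K) := by
      have h3 := congrArg (algebraMap (𝓞 K) K) hu
      rwa [_root_.map_pow, _root_.map_mul] at h3
    have hkey : ((algebraMap K ℂ (w : K)) / γ) ^ n = algebraMap K ℂ (u : K) := by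
      rw [div_pow, hγ, ← _root_.map_pow, hKpow, _root_.map_mul,
        mul_div_cancel_left₀ _ hgC]
    rw [hkey]
    exact map_isIntegral_int (algebraMap K ℂ) u.2
  set x : AA := ⟨(algebraMap K ℂ ((sO : K))) / γ, quot_int sO (Ideal.subset_span (by simp))⟩ with hx
  set y : AA := ⟨(algebraMap K ℂ ((rO : K))) / γ, quot_int rO (Ideal.subset_span (by simp))⟩ with hy
  have hxs : (x : ℂ) * γ = (s : ℂ) := by
    show ((s : ℂ) / γ) * γ = (s : ℂ)
    field_simp
  have hyr : (y : ℂ) * γ = (r : ℂ) := by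
    show ((r : ℂ) / γ) * γ = (r : ℂ)
    field_simp
  -- transfer the ideal computation to AA
  set φ : 𝓞 K →+* AA :=
    ((algebraMap K ℂ).comp (algebraMap (𝓞 K) K)).codRestrict AA.toSubsemiring
      (fun w => map_isIntegral_int (algebraMap K ℂ) w.2) with hφ
  have hφs : φ sO = s := Subtype.ext rfl
  have hφr : φ rO = r := Subtype.ext rfl
  have hφg : φ g = γA ^ n := by
    apply Subtype.ext
    show algebraMap K ℂ (g : K) = (γA ^ n : AA)
    rw [← hγ]
    rfl
  set J : Ideal AA := Ideal.span {x, y} with hJ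
  have hsr_le : Ideal.span {(s : AA), r} ≤ Ideal.span {γA} * J := by
    rw [Ideal.span_le]
    rintro z hz
    rcases hz with h | h
    · rw [h]
      have h5 : (s : AA) = γA * x := by
        apply Subtype.ext
        rw [MulMemClass.coe_mul, ← hxs]
        ring
      rw [h5]
      exact Ideal.mul_mem_mul (Ideal.subset_span rfl) (Ideal.subset_span (by simp))
    · rw [Set.mem_singleton_iff.mp h]
      have h5 : (r : AA) = γA * y := by
        apply Subtype.ext
        rw [MulMemClass.coe_mul, ← hyr]
        ring
      rw [h5]
      exact Ideal.mul_mem_mul (Ideal.subset_span rfl) (Ideal.subset_span (by simp))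
  have hgmem : φ g ∈ Ideal.span {(s : AA), r} ^ n := by
    have h1 : g ∈ I ^ n := by rw [hg]; exact Ideal.subset_span rfl
    have h2 : φ g ∈ Ideal.map φ (I ^ n) := Ideal.mem_map_of_mem φ h1
    rwa [Ideal.map_pow, hIdef, Ideal.map_span, Set.image_insert_eq, Set.image_singleton,
      hφs, hφr] at h2
  have hgmem2 : γA ^ n ∈ Ideal.span {γA ^ n} * (J ^ n) := by
    have h6 : γA ^ n ∈ (Ideal.span {γA} * J) ^ n := by
      rw [← hφg]
      exact (Ideal.pow_right_mono hsr_le n) hgmem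
    rwa [mul_pow, Ideal.span_singleton_pow] at h6
  obtain ⟨z, hzJ, hz⟩ := Ideal.mem_span_singleton_mul.mp hgmem2
  have hz1 : z = 1 := by
    have := mul_left_cancel₀ (pow_ne_zero n hγA0) (hz.trans (mul_one _).symm)
    exact this
  have h1J : (1 : AA) ∈ J := Ideal.pow_le_self hnpos.ne' (hz1 ▸ hzJ)
  obtain ⟨p, q, hpq⟩ := Ideal.mem_span_pair.mp h1J
  exact ⟨x, y, p, q, γ, hγ0, hpq, hxs, hyr⟩


/-- If `(x, -y)` is fixed (in the suitable sense) by `M` and `p*x+q*y=1`, we can conjugate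
`M` to make the lower-left entry vanish. -/
lemma conj_aux {R : Type*} [CommRing R] (M : Matrix.SpecialLinearGroup (Fin 2) R)
    (x y p q : R) (hpq : p * x + q * y = 1)
    (F1 : (M : Matrix (Fin 2) (Fin 2) R) 0 0 * x - (M : Matrix (Fin 2) (Fin 2) R) 0 1 * y = x)
    (F2 : (M : Matrix (Fin 2) (Fin 2) R) 1 0 * x - (M : Matrix (Fin 2) (Fin 2) R) 1 1 * y = -y) :
    ∃ h : Matrix.SpecialLinearGroup (Fin 2) R,
      ((h * M * h⁻¹ : Matrix.SpecialLinearGroup (Fin 2) R) :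
        Matrix (Fin 2) (Fin 2) R) 1 0 = 0 := by
  have hdet' : Matrix.det !![p, -q; y, x] = 1 := by
    rw [Matrix.det_fin_two_of]
    linear_combination hpq
  obtain ⟨h, hco⟩ : ∃ h : Matrix.SpecialLinearGroup (Fin 2) R,
      (h : Matrix (Fin 2) (Fin 2) R) = !![p, -q; y, x] := ⟨⟨_, hdet'⟩, rfl⟩
  refine ⟨h, ?_⟩
  rw [Matrix.SpecialLinearGroup.coe_mul, Matrix.SpecialLinearGroup.coe_mul,
    Matrix.SpecialLinearGroup.coe_inv]
  rw [hco, Matrix.adjugate_fin_two]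
  simp [Matrix.mul_apply, Fin.sum_univ_two, Matrix.vecMul, dotProduct, Matrix.vecHead, Matrix.vecTail]
  linear_combination y * F1 + x * F2

set_option maxHeartbeats 2000000 in
set_option synthInstance.maxHeartbeats 400000 in
/-- Every `M ∈ SL(2, 𝔸)` (where `𝔸` is the ring of algebraic integers,
the integral closure of `ℤ` in `ℂ`) with trace `2` can be conjugated within `SL(2, 𝔸)`
to an upper triangular matrix. -/
theorem stmt_2 (M : Matrix.SpecialLinearGroup (Fin 2) (integralClosure ℤ ℂ))
    (hM : Matrix.trace (M : Matrix (Fin 2) (Fin 2) (integralClosure ℤ ℂ)) = 2) :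
    ∃ h : Matrix.SpecialLinearGroup (Fin 2) (integralClosure ℤ ℂ),
      ((h * M * h⁻¹ : Matrix.SpecialLinearGroup (Fin 2) (integralClosure ℤ ℂ)) :
        Matrix (Fin 2) (Fin 2) (integralClosure ℤ ℂ)) 1 0 = 0 := by
  classical
  have htr : (M : Matrix (Fin 2) (Fin 2) AA) 0 0 + (M : Matrix (Fin 2) (Fin 2) AA) 1 1 = 2 := by
    rw [Matrix.trace_fin_two] at hM; exact hM
  have hdet : (M : Matrix (Fin 2) (Fin 2) AA) 0 0 * (M : Matrix (Fin 2) (Fin 2) AA) 1 1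
      - (M : Matrix (Fin 2) (Fin 2) AA) 0 1 * (M : Matrix (Fin 2) (Fin 2) AA) 1 0 = 1 := by
    have := M.2
    rwa [Matrix.det_fin_two] at this
  have htrC : ((M : Matrix (Fin 2) (Fin 2) AA) 0 0 : ℂ)
      + ((M : Matrix (Fin 2) (Fin 2) AA) 1 1 : ℂ) = 2 := by
    have h0 := congrArg (Subtype.val) htr
    push_cast at h0
    exact h0
  have hdetC : ((M : Matrix (Fin 2) (Fin 2) AA) 0 0 : ℂ) * ((M : Matrix (Fin 2) (Fin 2) AA) 1 1 : ℂ)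
      - ((M : Matrix (Fin 2) (Fin 2) AA) 0 1 : ℂ) * ((M : Matrix (Fin 2) (Fin 2) AA) 1 0 : ℂ)
      = 1 := by
    have h0 := congrArg (Subtype.val) hdet
    push_cast at h0
    exact h0
  have hkeyC : ((M : Matrix (Fin 2) (Fin 2) AA) 1 0 : ℂ) * ((M : Matrix (Fin 2) (Fin 2) AA) 0 1 : ℂ)
      + (((M : Matrix (Fin 2) (Fin 2) AA) 0 0 : ℂ) - 1)
        * (((M : Matrix (Fin 2) (Fin 2) AA) 0 0 : ℂ) - 1) = 0 := by
    linear_combination (-1 : ℂ) * hdetC + ((M : Matrix (Fin 2) (Fin 2) AA) 0 0 : ℂ) * htrC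
  by_cases hb0 : (M : Matrix (Fin 2) (Fin 2) AA) 0 1 = 0
  · -- lower triangular case: both diagonal entries are 1
    have hbC0 : ((M : Matrix (Fin 2) (Fin 2) AA) 0 1 : ℂ) = 0 := by rw [hb0]; simp
    have haC1 : ((M : Matrix (Fin 2) (Fin 2) AA) 0 0 : ℂ) = 1 := by
      have h1 : (((M : Matrix (Fin 2) (Fin 2) AA) 0 0 : ℂ) - 1)
          * (((M : Matrix (Fin 2) (Fin 2) AA) 0 0 : ℂ) - 1) = 0 := by
        linear_combination hkeyC - hbC0 * ((M : Matrix (Fin 2) (Fin 2) AA) 1 0 : ℂ)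
      exact sub_eq_zero.mp (mul_self_eq_zero.mp h1)
    have hd1 : (M : Matrix (Fin 2) (Fin 2) AA) 1 1 = 1 := by
      apply Subtype.ext
      push_cast
      linear_combination htrC - haC1
    exact conj_aux M 0 (-1) 0 (-1) (by ring) (by rw [hb0]; ring) (by rw [hd1]; ring)
  · -- b ≠ 0: take a square root β of b and set ρ = (a-1)/β
    obtain ⟨β, hβ⟩ := IsAlgClosed.exists_pow_nat_eq
      (((M : Matrix (Fin 2) (Fin 2) AA) 0 1 : AA) : ℂ) two_pos
    have hβ0 : β ≠ 0 := by
      rintro rfl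
      rw [zero_pow two_ne_zero] at hβ
      exact hb0 (Subtype.ext hβ.symm)
    have hbβ : ((M : Matrix (Fin 2) (Fin 2) AA) 0 1 : ℂ) = β * β := by rw [← hβ]; ring
    have hβint : IsIntegral ℤ β :=
      IsIntegral.of_pow two_pos (by rw [hβ]; exact ((M : Matrix (Fin 2) (Fin 2) AA) 0 1).2)
    set ρ : ℂ := (((M : Matrix (Fin 2) (Fin 2) AA) 0 0 : ℂ) - 1) / β with hρdef
    have htρ : ρ * β = ((M : Matrix (Fin 2) (Fin 2) AA) 0 0 : ℂ) - 1 := div_mul_cancel₀ _ hβ0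
    have hρc : ρ * ρ = -((M : Matrix (Fin 2) (Fin 2) AA) 1 0 : ℂ) := by
      have h1 : (ρ * ρ) * (β * β) = (-((M : Matrix (Fin 2) (Fin 2) AA) 1 0 : ℂ)) * (β * β) := by
        calc (ρ * ρ) * (β * β) = (ρ * β) * (ρ * β) := by ring
        _ = (((M : Matrix (Fin 2) (Fin 2) AA) 0 0 : ℂ) - 1)
            * (((M : Matrix (Fin 2) (Fin 2) AA) 0 0 : ℂ) - 1) := by rw [htρ]
        _ = -(((M : Matrix (Fin 2) (Fin 2) AA) 1 0 : ℂ)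
            * ((M : Matrix (Fin 2) (Fin 2) AA) 0 1 : ℂ)) := by linear_combination hkeyC
        _ = (-((M : Matrix (Fin 2) (Fin 2) AA) 1 0 : ℂ)) * (β * β) := by rw [← hbβ]; ring
      exact mul_right_cancel₀ (mul_ne_zero hβ0 hβ0) h1
    have hρint : IsIntegral ℤ ρ := by
      apply IsIntegral.of_pow two_pos
      have h2 : ρ ^ 2 = ((-((M : Matrix (Fin 2) (Fin 2) AA) 1 0) : AA) : ℂ) := by
        push_cast
        rw [pow_two, hρc]
      rw [h2]
      exact (-((M : Matrix (Fin 2) (Fin 2) AA) 1 0) : AA).2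
    have hβA0 : (⟨β, hβint⟩ : AA) ≠ 0 := fun h => hβ0 (Subtype.ext_iff.mp h)
    obtain ⟨x, y, p, q, γ, hγ0, hpq, hxγ, hyγ⟩ :=
      bezout_pair (⟨β, hβint⟩ : AA) (⟨ρ, hρint⟩ : AA) hβA0
    have hxγ' : (x : ℂ) * γ = β := hxγ
    have hyγ' : (y : ℂ) * γ = ρ := hyγ
    have hx' : (x : ℂ) = β / γ := by rw [eq_div_iff hγ0]; exact hxγ'
    have hy' : (y : ℂ) = ρ / γ := by rw [eq_div_iff hγ0]; exact hyγ'
    refine conj_aux M x y p q hpq ?_ ?_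
    · apply Subtype.ext
      push_cast
      rw [hx', hy']
      linear_combination ((-β) * htρ + (-ρ) * hbβ) / γ
    · apply Subtype.ext
      push_cast
      rw [hx', hy']
      linear_combination ((-ρ) * htrC + (-ρ) * htρ + β * hρc) / γ
end

section
/- Let L be a number field and let β, γ ∈ 𝓞_L. Suppose Γ is a subgroup of SL(2, 𝓞_L) such that μ = [[1+βγ, −β²], [γ², 1−βγ]] belongs to Γ, Γ equals the normal closure of {μ} in Γ, and there exists g ∈ Γ such that the vector g·(β, γ)ᵀ is not an L-scalar multiple of (β, γ)ᵀ. Then the ideal of 𝓞_L generated by β and γ is all of 𝓞_L; that is, the ideals β𝓞_L and γ𝓞_L are comaximal. -/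
open NumberField

/-- Let `L` be a number field, `β γ ∈ 𝓞 L`, and `Γ ≤ SL(2, 𝓞 L)` be
normally generated by `μ = !![1 + βγ, -β²; γ², 1 - βγ]`. If some `g ∈ Γ` moves the vector
`(β, γ)ᵀ` off its `L`-line, then the ideal generated by `β` and `γ` is all of `𝓞 L`. -/
theorem stmt_3 (L : Type*) [Field L] [NumberField L] (β γ : 𝓞 L)
    (Γ : Subgroup (Matrix.SpecialLinearGroup (Fin 2) (𝓞 L)))
    (μ : Matrix.SpecialLinearGroup (Fin 2) (𝓞 L))
    (hμ : (μ : Matrix (Fin 2) (Fin 2) (𝓞 L)) = !![1 + β * γ, -β ^ 2; γ ^ 2, 1 - β * γ])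
    (hμΓ : μ ∈ Γ)
    (hgen : Subgroup.normalClosure ({⟨μ, hμΓ⟩} : Set Γ) = ⊤)
    (hg : ∃ g ∈ Γ, ¬ ∃ c : L,
      (((g : Matrix (Fin 2) (Fin 2) (𝓞 L)).map (algebraMap (𝓞 L) L)).mulVec
          ![(β : L), (γ : L)]) = c • ![(β : L), (γ : L)]) :
    Ideal.span ({β, γ} : Set (𝓞 L)) = ⊤ := by
  by_contra hI
  obtain ⟨m, hmax, hle⟩ := Ideal.exists_le_maximal _ hI
  have hβ : β ∈ m := hle (Ideal.subset_span (by simp))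
  have hγ : γ ∈ m := hle (Ideal.subset_span (by simp))
  set v : Fin 2 → 𝓞 L := ![β, γ] with hv
  -- matrices with entries of a vector in an ideal map the ideal-vector into the ideal
  have hAw : ∀ (I : Ideal (𝓞 L)) (A : Matrix (Fin 2) (Fin 2) (𝓞 L)) (d : Fin 2 → 𝓞 L),
      (∀ j, d j ∈ I) → ∀ i, (A.mulVec d) i ∈ I := by
    intro I A d hd i
    simp only [Matrix.mulVec, dotProduct, Fin.sum_univ_two]
    exact Ideal.add_mem _ (Ideal.mul_mem_left _ _ (hd 0)) (Ideal.mul_mem_left _ _ (hd 1))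
  -- action of μ on an arbitrary vector
  have hmu : ∀ w : Fin 2 → 𝓞 L,
      (μ : Matrix (Fin 2) (Fin 2) (𝓞 L)).mulVec w = w + (γ * w 0 - β * w 1) • v := by
    intro w
    funext i
    fin_cases i <;>
      · simp only [hμ, Matrix.mulVec, dotProduct, Fin.sum_univ_two, Pi.add_apply,
          Pi.smul_apply, smul_eq_mul, hv]
        simp [Matrix.cons_val_zero, Matrix.cons_val_one]
        ring
  -- key induction: every element of Γ fixes v modulo m ^ k
  have key : ∀ (k : ℕ) (g : Γ), ∀ i,
      (((g : Matrix.SpecialLinearGroup (Fin 2) (𝓞 L)) :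
        Matrix (Fin 2) (Fin 2) (𝓞 L)).mulVec v) i - v i ∈ m ^ k := by
    intro k
    induction k with
    | zero => intro g i; simp
    | succ k IH =>
      set H : Subgroup Γ :=
        { carrier := {g : Γ | ∀ i,
            (((g : Matrix.SpecialLinearGroup (Fin 2) (𝓞 L)) :
              Matrix (Fin 2) (Fin 2) (𝓞 L)).mulVec v) i - v i ∈ m ^ (k + 1)}
          one_mem' := by
            intro i
            simp [Matrix.one_mulVec]
          mul_mem' := by
            intro a b ha hb i
            have hab : (((a * b : Γ) : Matrix.SpecialLinearGroup (Fin 2) (𝓞 L)) :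
                Matrix (Fin 2) (Fin 2) (𝓞 L)) =
                ((a : Matrix.SpecialLinearGroup (Fin 2) (𝓞 L)) :
                  Matrix (Fin 2) (Fin 2) (𝓞 L)) *
                ((b : Matrix.SpecialLinearGroup (Fin 2) (𝓞 L)) :
                  Matrix (Fin 2) (Fin 2) (𝓞 L)) := by
              rw [show ((a * b : Γ) : Matrix.SpecialLinearGroup (Fin 2) (𝓞 L))
                  = (a : Matrix.SpecialLinearGroup (Fin 2) (𝓞 L))
                    * (b : Matrix.SpecialLinearGroup (Fin 2) (𝓞 L)) from rfl,
                Matrix.SpecialLinearGroup.coe_mul]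
            set A := ((a : Matrix.SpecialLinearGroup (Fin 2) (𝓞 L)) :
              Matrix (Fin 2) (Fin 2) (𝓞 L))
            set B := ((b : Matrix.SpecialLinearGroup (Fin 2) (𝓞 L)) :
              Matrix (Fin 2) (Fin 2) (𝓞 L))
            have hkey : ((A * B).mulVec v) i - v i
                = (A.mulVec (B.mulVec v - v)) i + ((A.mulVec v) i - v i) := by
              rw [← Matrix.mulVec_mulVec, Matrix.mulVec_sub]
              simp only [Pi.sub_apply]
              ring
            rw [hab, hkey]
            exact Ideal.add_mem _
              (hAw _ A _ (fun j => by simpa using hb j) i) (ha i)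
          inv_mem' := by
            intro a ha i
            set A := ((a : Matrix.SpecialLinearGroup (Fin 2) (𝓞 L)) :
              Matrix (Fin 2) (Fin 2) (𝓞 L))
            set Ainv := (((a⁻¹ : Γ) : Matrix.SpecialLinearGroup (Fin 2) (𝓞 L)) :
              Matrix (Fin 2) (Fin 2) (𝓞 L))
            have hAA : Ainv * A = 1 := by
              have h1 : ((a⁻¹ : Γ) : Matrix.SpecialLinearGroup (Fin 2) (𝓞 L))
                  * (a : Matrix.SpecialLinearGroup (Fin 2) (𝓞 L)) = 1 := by
                rw [show ((a⁻¹ : Γ) : Matrix.SpecialLinearGroup (Fin 2) (𝓞 L))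
                    = ((a : Matrix.SpecialLinearGroup (Fin 2) (𝓞 L)))⁻¹ from rfl,
                  inv_mul_cancel]
              calc Ainv * A = ((((a⁻¹ : Γ) : Matrix.SpecialLinearGroup (Fin 2) (𝓞 L))
                      * (a : Matrix.SpecialLinearGroup (Fin 2) (𝓞 L)) :
                      Matrix.SpecialLinearGroup (Fin 2) (𝓞 L)) :
                      Matrix (Fin 2) (Fin 2) (𝓞 L)) :=
                    (Matrix.SpecialLinearGroup.coe_mul _ _).symm
                _ = 1 := by rw [h1, Matrix.SpecialLinearGroup.coe_one]
            have hkey : (Ainv.mulVec v) i - v i = (Ainv.mulVec (v - A.mulVec v)) i := by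
              rw [Matrix.mulVec_sub, Matrix.mulVec_mulVec, hAA, Matrix.one_mulVec]
              simp only [Pi.sub_apply]
            rw [hkey]
            exact hAw _ Ainv _ (fun j => by
              simpa using neg_mem (ha j)) i }
      intro g
      have hg' : g ∈ H := by
        have : Subgroup.normalClosure ({⟨μ, hμΓ⟩} : Set Γ) ≤ H :=
          (Subgroup.closure_le H).mpr (by
            rintro x hx
            rw [Group.mem_conjugatesOfSet_iff] at hx
            obtain ⟨a, ha, hconj⟩ := hx
            simp only [Set.mem_singleton_iff] at ha
            subst ha
            obtain ⟨c, hc⟩ := isConj_iff.mp hconj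
            subst hc
            intro i
            set C := ((c : Matrix.SpecialLinearGroup (Fin 2) (𝓞 L)) :
              Matrix (Fin 2) (Fin 2) (𝓞 L))
            set D := (((c⁻¹ : Γ) : Matrix.SpecialLinearGroup (Fin 2) (𝓞 L)) :
              Matrix (Fin 2) (Fin 2) (𝓞 L))
            have hx' : (((c * (⟨μ, hμΓ⟩ : Γ) * c⁻¹ : Γ) :
                Matrix.SpecialLinearGroup (Fin 2) (𝓞 L)) :
                Matrix (Fin 2) (Fin 2) (𝓞 L))
                = C * (μ : Matrix (Fin 2) (Fin 2) (𝓞 L)) * D := by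
              rw [show ((c * (⟨μ, hμΓ⟩ : Γ) * c⁻¹ : Γ) :
                  Matrix.SpecialLinearGroup (Fin 2) (𝓞 L))
                  = (c : Matrix.SpecialLinearGroup (Fin 2) (𝓞 L)) * μ
                    * ((c⁻¹ : Γ) : Matrix.SpecialLinearGroup (Fin 2) (𝓞 L)) from rfl,
                Matrix.SpecialLinearGroup.coe_mul, Matrix.SpecialLinearGroup.coe_mul]
            have hCD : C * D = 1 := by
              have h1 : (c : Matrix.SpecialLinearGroup (Fin 2) (𝓞 L))
                  * ((c⁻¹ : Γ) : Matrix.SpecialLinearGroup (Fin 2) (𝓞 L)) = 1 := by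
                rw [show ((c⁻¹ : Γ) : Matrix.SpecialLinearGroup (Fin 2) (𝓞 L))
                    = ((c : Matrix.SpecialLinearGroup (Fin 2) (𝓞 L)))⁻¹ from rfl,
                  mul_inv_cancel]
              calc C * D = (((c : Matrix.SpecialLinearGroup (Fin 2) (𝓞 L))
                      * ((c⁻¹ : Γ) : Matrix.SpecialLinearGroup (Fin 2) (𝓞 L)) :
                      Matrix.SpecialLinearGroup (Fin 2) (𝓞 L)) :
                      Matrix (Fin 2) (Fin 2) (𝓞 L)) :=
                    (Matrix.SpecialLinearGroup.coe_mul _ _).symm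
                _ = 1 := by rw [h1, Matrix.SpecialLinearGroup.coe_one]
            set w := D.mulVec v with hw
            have hwk : ∀ j, w j - v j ∈ m ^ k := IH c⁻¹
            set t := γ * w 0 - β * w 1 with ht
            have htm : t ∈ m ^ (k + 1) := by
              have hteq : t = γ * (w 0 - v 0) - β * (w 1 - v 1) := by
                simp only [hv, Matrix.cons_val_zero, Matrix.cons_val_one, Matrix.head_cons, ht]
                ring
              rw [hteq, pow_succ' m k]
              exact Ideal.sub_mem _ (Ideal.mul_mem_mul hγ (hwk 0))
                (Ideal.mul_mem_mul hβ (hwk 1))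
            have hCw : C.mulVec w = v := by
              rw [hw, Matrix.mulVec_mulVec, hCD, Matrix.one_mulVec]
            have hact : ((C * (μ : Matrix (Fin 2) (Fin 2) (𝓞 L)) * D).mulVec v) i - v i
                = t * (C.mulVec v) i := by
              rw [mul_assoc, ← Matrix.mulVec_mulVec, ← Matrix.mulVec_mulVec, hmu w,
                Matrix.mulVec_add, Matrix.mulVec_smul, hCw, ht]
              simp only [Pi.add_apply, Pi.smul_apply, smul_eq_mul]
              ring
            rw [hx', hact]
            exact Ideal.mul_mem_right _ _ htm)
        exact this (hgen ▸ Subgroup.mem_top g)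
      exact hg'
  -- every element of Γ fixes v exactly
  have hbot : (⨅ k : ℕ, m ^ k : Ideal (𝓞 L)) = ⊥ :=
    Ideal.iInf_pow_eq_bot_of_isDomain m hmax.ne_top
  have hfix : ∀ g : Γ,
      ((g : Matrix.SpecialLinearGroup (Fin 2) (𝓞 L)) :
        Matrix (Fin 2) (Fin 2) (𝓞 L)).mulVec v = v := by
    intro g
    funext i
    have hmem : (((g : Matrix.SpecialLinearGroup (Fin 2) (𝓞 L)) :
        Matrix (Fin 2) (Fin 2) (𝓞 L)).mulVec v) i - v i ∈ (⨅ k : ℕ, m ^ k : Ideal (𝓞 L)) :=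
      Ideal.mem_iInf.mpr (fun k => key k g i)
    rw [hbot, Ideal.mem_bot, sub_eq_zero] at hmem
    exact hmem
  obtain ⟨g, hgΓ, hnc⟩ := hg
  refine hnc ⟨1, ?_⟩
  have hfg := hfix ⟨g, hgΓ⟩
  funext i
  have he := congrFun hfg i
  fin_cases i <;>
    · simp only [Matrix.mulVec, dotProduct, Fin.sum_univ_two, hv,
        Matrix.cons_val_zero, Matrix.cons_val_one, Matrix.head_cons] at he ⊢
      simp only [Matrix.map_apply, one_smul]
      have := congrArg (algebraMap (𝓞 L) L) he
      push_cast at this ⊢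
      convert this using 2
end

section
/- Let R be a commutative ring and let α, r, s, p, q ∈ R satisfy pr + qs = 1. Set β = rα, γ = sα, μ = [[1+βγ, −β²], [γ², 1−βγ]], and h = [[p, q], [−s, r]]. Then det h = 1, det μ = 1, and h μ h⁻¹ = [[1, −α²], [0, 1]]. -/
/-- Over a commutative ring `R`, if `p * r + q * s = 1`, `β = r * α`,
`γ = s * α`, `μ = !![1 + βγ, -β²; γ², 1 - βγ]` and `h = !![p, q; -s, r]`, then
`det h = 1`, `det μ = 1`, and `h * μ * h⁻¹ = !![1, -α²; 0, 1]`. -/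
theorem stmt_5 (R : Type*) [CommRing R] (α r s p q : R) (hpq : p * r + q * s = 1)
    (β γ : R) (hβ : β = r * α) (hγ : γ = s * α)
    (μ h : Matrix (Fin 2) (Fin 2) R)
    (hμ : μ = !![1 + β * γ, -β ^ 2; γ ^ 2, 1 - β * γ])
    (hh : h = !![p, q; -s, r]) :
    h.det = 1 ∧ μ.det = 1 ∧ h * μ * h⁻¹ = !![1, -α ^ 2; 0, 1] := by
  have hdet : h.det = 1 := by
    subst hh; simp [Matrix.det_fin_two_of]; linear_combination hpq
  refine ⟨hdet, ?_, ?_⟩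
  · subst hμ hβ hγ; simp [Matrix.det_fin_two_of]; ring
  · have hinv : h⁻¹ = h.adjugate := by
      rw [Matrix.inv_def, hdet]; simp
    rw [hinv, hh, hμ, hβ, hγ]
    rw [Matrix.adjugate_fin_two]
    ext i j
    fin_cases i <;> fin_cases j <;>
      simp [Matrix.mul_apply, Fin.sum_univ_succ] <;>
      first
        | linear_combination hpq
        | linear_combination (-(α^2)*(p*r+q*s+1))*hpq
        | ring
end

section
/- Let G be a group, R ⊆ G a subset, K a subgroup of G, and μ ∈ G an element lying both in the subgroup generated by R and in K. Suppose K equals the normal closure of {μ} in K, and suppose G is generated by R ∪ K. Then the normal closure of R in G equals G; equivalently, the quotient of G by the normal closure of R is the trivial group. -/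
/-- If `μ` lies in the subgroup generated by `R` and in a subgroup `K`
which it normally generates, and `G` is generated by `R ∪ K`, then the normal closure of
`R` in `G` is all of `G`. -/
theorem stmt_6 (G : Type*) [Group G] (R : Set G) (K : Subgroup G) (μ : G)
    (hμR : μ ∈ Subgroup.closure R) (hμK : μ ∈ K)
    (hKgen : Subgroup.normalClosure ({⟨μ, hμK⟩} : Set K) = ⊤)
    (hG : Subgroup.closure (R ∪ (K : Set G)) = ⊤) :
    Subgroup.normalClosure R = ⊤ := by
  set N := Subgroup.normalClosure R with hNdef
  have hRN : R ⊆ N := Subgroup.subset_normalClosure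
  have hμN : μ ∈ N := (Subgroup.closure_le N).2 hRN hμR
  have hcomapNormal : (N.comap K.subtype).Normal :=
    Subgroup.Normal.comap inferInstance K.subtype
  have hsub : ({⟨μ, hμK⟩} : Set K) ⊆ (N.comap K.subtype : Set K) := by
    intro x hx
    rcases hx with rfl
    simpa [Subgroup.mem_subgroupOf] using hμN
  have hKN : (K : Set G) ⊆ N := by
    intro k hk
    have : (⟨k, hk⟩ : K) ∈ N.comap K.subtype := by
      have := Subgroup.normalClosure_le_normal hsub
      rw [hKgen] at this
      exact this (Subgroup.mem_top _)
    simpa [Subgroup.mem_subgroupOf] using this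
  rw [eq_top_iff, ← hG]
  exact (Subgroup.closure_le N).2 (Set.union_subset hRN hKN)
end

section
/- Let ℓ = e^{iπ/6} ∈ ℂ, and let t and r denote the images in PSL(2, ℂ) of the matrices [[1, 1], [0, 1]] and [[ℓ, 0], [0, ℓ⁻¹]] respectively. Then the abelianization of the subgroup of PSL(2, ℂ) generated by t and r is isomorphic to ℤ/6ℤ. -/
open scoped MatrixGroups

namespace Stmt8Aux

open Matrix

/-- The square of the top-left entry, as a function on `PSL(2,ℂ)`. -/
noncomputable def sq (g : PSL(2, ℂ)) : ℂ :=
  Quotient.liftOn' g (fun u : SL(2, ℂ) => ((u : Matrix (Fin 2) (Fin 2) ℂ) 0 0) ^ 2) (by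
    intro a b hab
    have h : a⁻¹ * b ∈ Subgroup.center (SL(2, ℂ)) := QuotientGroup.leftRel_apply.mp hab
    obtain ⟨ω, hω, hscalar⟩ := Matrix.SpecialLinearGroup.mem_center_iff.mp h
    have hb : b = a * (a⁻¹ * b) := by group
    have hbm : (b : Matrix (Fin 2) (Fin 2) ℂ)
        = (a : Matrix (Fin 2) (Fin 2) ℂ) * ((a⁻¹ * b : SL(2, ℂ)) : Matrix (Fin 2) (Fin 2) ℂ) := by
      rw [← Matrix.SpecialLinearGroup.coe_mul, ← hb]
    rw [← hscalar] at hbm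
    have hent : (b : Matrix (Fin 2) (Fin 2) ℂ) 0 0
        = (a : Matrix (Fin 2) (Fin 2) ℂ) 0 0 * ω := by
      rw [hbm]; simp [Matrix.scalar_apply, Matrix.mul_diagonal]
    have hω2 : ω ^ 2 = 1 := by simpa using hω
    show ((a : Matrix (Fin 2) (Fin 2) ℂ) 0 0) ^ 2 = ((b : Matrix (Fin 2) (Fin 2) ℂ) 0 0) ^ 2
    rw [hent, mul_pow, hω2, mul_one])

lemma sq_mk (u : SL(2, ℂ)) :
    sq (QuotientGroup.mk u) = ((u : Matrix (Fin 2) (Fin 2) ℂ) 0 0) ^ 2 := rfl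

/-- Upper triangular subgroup of `SL(2,ℂ)`. -/
def U : Subgroup (Matrix.SpecialLinearGroup (Fin 2) ℂ) where
  carrier := {u | (u : Matrix (Fin 2) (Fin 2) ℂ) 1 0 = 0}
  one_mem' := by simp
  mul_mem' := by
    intro a b ha hb
    simp only [Set.mem_setOf_eq] at *
    rw [Matrix.SpecialLinearGroup.coe_mul, Matrix.mul_apply, Fin.sum_univ_two, ha, hb]
    ring
  inv_mem' := by
    intro a ha
    simp only [Set.mem_setOf_eq] at *
    rw [Matrix.SpecialLinearGroup.coe_inv, Matrix.adjugate_fin_two]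
    simp [ha]

lemma mem_U_iff {u : SL(2, ℂ)} : u ∈ U ↔ (u : Matrix (Fin 2) (Fin 2) ℂ) 1 0 = 0 := Iff.rfl

noncomputable abbrev P : Subgroup PSL(2, ℂ) :=
  Subgroup.map (QuotientGroup.mk' (Subgroup.center (Matrix.SpecialLinearGroup (Fin 2) ℂ))) U

lemma sq_ne_zero {g : PSL(2, ℂ)} (hg : g ∈ P) : sq g ≠ 0 := by
  obtain ⟨u, hu, rfl⟩ := hg
  have hdet : ((u : Matrix (Fin 2) (Fin 2) ℂ)).det = 1 := u.2
  rw [Matrix.det_fin_two, mem_U_iff.mp hu, mul_zero, sub_zero] at hdet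
  have h00 : (u : Matrix (Fin 2) (Fin 2) ℂ) 0 0 ≠ 0 := left_ne_zero_of_mul_eq_one hdet
  show ((u : Matrix (Fin 2) (Fin 2) ℂ) 0 0) ^ 2 ≠ 0
  exact pow_ne_zero _ h00

lemma sq_mul {g h : PSL(2, ℂ)} (hg : g ∈ P) (hh : h ∈ P) :
    sq (g * h) = sq g * sq h := by
  obtain ⟨u, hu, rfl⟩ := hg
  obtain ⟨v, hv, rfl⟩ := hh
  rw [← _root_.map_mul]
  show sq (QuotientGroup.mk (u * v)) = sq (QuotientGroup.mk u) * sq (QuotientGroup.mk v)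
  rw [sq_mk, sq_mk, sq_mk, Matrix.SpecialLinearGroup.coe_mul, Matrix.mul_apply,
    Fin.sum_univ_two, mem_U_iff.mp hv, mul_zero, add_zero, mul_pow]

lemma sq_one : sq (1 : PSL(2, ℂ)) = 1 := by
  show sq (QuotientGroup.mk 1) = 1
  rw [sq_mk]
  simp

/-- The diagonal-squared homomorphism on any subgroup of upper-triangular elements. -/
noncomputable def Fhom (G : Subgroup PSL(2, ℂ)) (hGP : G ≤ P) : ↥G →* ℂˣ where
  toFun g := Units.mk0 (sq (g : PSL(2, ℂ))) (sq_ne_zero (hGP g.2))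
  map_one' := Units.ext (by simpa using sq_one)
  map_mul' a b := Units.ext (by
    simp only [Units.val_mk0, Units.val_mul, Subgroup.coe_mul]
    exact sq_mul (hGP a.2) (hGP b.2))

lemma Fhom_val (G : Subgroup PSL(2, ℂ)) (hGP : G ≤ P) (g : ↥G) :
    ((Fhom G hGP g : ℂˣ) : ℂ) = sq (g : PSL(2, ℂ)) := rfl

end Stmt8Aux



open Matrix Stmt8Aux commutatorElement in
/-- For `ℓ = e^{iπ/6}`, the subgroup of `PSL(2, ℂ)` generated by the
images of `!![1, 1; 0, 1]` and `!![ℓ, 0; 0, ℓ⁻¹]` has abelianization `ℤ/6ℤ`. -/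
theorem stmt_8 (ℓ : ℂ) (hℓ : ℓ = Complex.exp (Complex.I * Real.pi / 6))
    (T R : SL(2, ℂ))
    (hT : (T : Matrix (Fin 2) (Fin 2) ℂ) = !![1, 1; 0, 1])
    (hR : (R : Matrix (Fin 2) (Fin 2) ℂ) = !![ℓ, 0; 0, ℓ⁻¹])
    (t r : PSL(2, ℂ))
    (ht : t = (QuotientGroup.mk T : PSL(2, ℂ)))
    (hr : r = (QuotientGroup.mk R : PSL(2, ℂ))) :
    Nonempty (Abelianization (Subgroup.closure ({t, r} : Set PSL(2, ℂ))) ≃*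
      Multiplicative (ZMod 6)) := by
  -- scalar facts
  have h0 : ℓ ≠ 0 := by rw [hℓ]; exact Complex.exp_ne_zero _
  have h6 : ℓ ^ 6 = -1 := by
    rw [hℓ, ← Complex.exp_nat_mul]
    rw [show ((6:ℕ):ℂ) * (Complex.I * Real.pi / 6) = (Real.pi : ℂ) * Complex.I by push_cast; ring]
    exact Complex.exp_pi_mul_I
  have hkey : ℓ ^ 2 - ℓ ^ 4 = 1 := by
    have h2 : ℓ ^ 2 = 1/2 + (Real.sqrt 3 / 2) * Complex.I := by
      rw [hℓ, ← Complex.exp_nat_mul]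
      rw [show ((2:ℕ):ℂ) * (Complex.I * Real.pi / 6) = ((Real.pi/3 : ℝ) : ℂ) * Complex.I by
        push_cast; ring]
      rw [Complex.exp_mul_I, ← Complex.ofReal_cos, ← Complex.ofReal_sin,
        Real.cos_pi_div_three, Real.sin_pi_div_three]
      push_cast; ring
    have h3 : ((Real.sqrt 3 : ℝ) : ℂ) ^ 2 = 3 := by
      rw [← Complex.ofReal_pow, Real.sq_sqrt (by norm_num : (3:ℝ) ≥ 0)]; norm_num
    have hI : (Complex.I) ^ 2 = -1 := Complex.I_sq
    linear_combination (1 - ℓ^2 - (1/2 + (Real.sqrt 3 / 2) * Complex.I)) * h2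
      - (Complex.I^2/4) * h3 - (3/4) * hI
  -- order of ℓ² in ℂ is 6
  have hζ6 : ((ℓ ^ 2 : ℂ)) ^ 6 = 1 := by
    rw [← pow_mul, show 2 * 6 = 6 * 2 from rfl, pow_mul, h6]; norm_num
  have horder : orderOf (ℓ ^ 2 : ℂ) = 6 := by
    have hdvd : orderOf (ℓ ^ 2 : ℂ) ∣ 6 := orderOf_dvd_of_pow_eq_one hζ6
    have hp := pow_orderOf_eq_one (ℓ ^ 2 : ℂ)
    have hpos : 0 < orderOf (ℓ ^ 2 : ℂ) := by
      rcases Nat.eq_zero_or_pos (orderOf (ℓ ^ 2 : ℂ)) with h | h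
      · rw [h] at hdvd; exact absurd (Nat.eq_zero_of_zero_dvd hdvd) (by norm_num)
      · exact h
    have hle : orderOf (ℓ ^ 2 : ℂ) ≤ 6 := Nat.le_of_dvd (by norm_num) hdvd
    set o := orderOf (ℓ ^ 2 : ℂ) with ho
    interval_cases o
    · -- o = 1
      have h1 : ℓ ^ 2 = 1 := by simpa using hp
      rw [show ℓ ^ 4 = (ℓ ^ 2) ^ 2 by ring, h1] at hkey; norm_num at hkey
    · -- o = 2
      have h22 : ℓ ^ 2 = 2 := by
        have hp' : (ℓ ^ 2) ^ 2 = 1 := hp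
        linear_combination hkey + hp'
      rw [h22] at hp; norm_num at hp
    · -- o = 3
      have hp' : (ℓ ^ 2) ^ 3 = 1 := hp
      rw [show (ℓ ^ 2) ^ 3 = ℓ ^ 6 by ring, h6] at hp'
      norm_num at hp'
    · norm_num at hdvd
    · norm_num at hdvd
    · rfl
  -- matrix facts
  have hSL : T = ⁅R, T⁆ * ⁅R ^ 2, T⁆⁻¹ := by
    apply Subtype.coe_injective
    simp only [commutatorElement_def, Matrix.SpecialLinearGroup.coe_mul,
      Matrix.SpecialLinearGroup.coe_inv, Matrix.SpecialLinearGroup.coe_pow, hT, hR,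
      Matrix.adjugate_fin_two, Matrix.mul_fin_two, pow_two]
    norm_num [Matrix.mul_fin_two, Matrix.adjugate_fin_two]
    have hi : ℓ * ℓ⁻¹ = 1 := mul_inv_cancel₀ h0
    have hi' : ℓ⁻¹ * ℓ = 1 := inv_mul_cancel₀ h0
    have hi2 : ℓ * ℓ * (ℓ⁻¹ * ℓ⁻¹) = 1 := by field_simp
    have hi3 : ℓ⁻¹ * ℓ⁻¹ * (ℓ * ℓ) = 1 := by field_simp
    refine ⟨⟨by simp only [hi, hi', hi2, hi3, one_mul, mul_one], ?_⟩,
      by simp only [hi, hi', hi2, hi3, one_mul, mul_one]⟩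
    simp only [hi, hi', hi2, hi3, one_mul, mul_one]
    linear_combination -hkey
  have hR6 : R ^ 6 ∈ Subgroup.center (Matrix.SpecialLinearGroup (Fin 2) ℂ) := by
    rw [Matrix.SpecialLinearGroup.mem_center_iff]
    refine ⟨-1, by norm_num, ?_⟩
    symm
    rw [Matrix.SpecialLinearGroup.coe_pow, hR]
    have h66 : (!![ℓ, 0; 0, ℓ⁻¹]) ^ 6 = !![ℓ ^ 6, 0; 0, (ℓ⁻¹) ^ 6] := by
      norm_num [pow_succ, Matrix.mul_fin_two]
    have h6' : (ℓ⁻¹) ^ 6 = -1 := by rw [inv_pow, h6]; norm_num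
    rw [h66, h6, h6']
    ext i j
    fin_cases i <;> fin_cases j <;> simp [Matrix.scalar_apply]
  -- memberships
  have hTU : T ∈ U := by rw [mem_U_iff, hT]; norm_num
  have hRU : R ∈ U := by rw [mem_U_iff, hR]; norm_num
  set G := Subgroup.closure ({t, r} : Set PSL(2, ℂ)) with hG
  have hGP : G ≤ P := by
    rw [hG, Subgroup.closure_le]
    rintro g (rfl | rfl)
    · exact ⟨T, hTU, ht.symm⟩
    · exact ⟨R, hRU, hr.symm⟩
  -- elements of G
  have htG : t ∈ G := Subgroup.subset_closure (by simp)
  have hrG : r ∈ G := Subgroup.subset_closure (by simp)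
  set tt : ↥G := ⟨t, htG⟩ with htt
  set rr : ↥G := ⟨r, hrG⟩ with hrr
  -- PSL-level identity
  have hidPSL : t = ⁅r, t⁆ * ⁅r ^ 2, t⁆⁻¹ := by
    rw [ht, hr]
    calc (QuotientGroup.mk T : PSL(2, ℂ))
        = QuotientGroup.mk (⁅R, T⁆ * ⁅R ^ 2, T⁆⁻¹) := by rw [← hSL]
      _ = ⁅(QuotientGroup.mk R : PSL(2, ℂ)), QuotientGroup.mk T⁆
            * ⁅(QuotientGroup.mk R : PSL(2, ℂ)) ^ 2, QuotientGroup.mk T⁆⁻¹ := by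
          simp [commutatorElement_def]
  have hid : tt = ⁅rr, tt⁆ * ⁅rr ^ 2, tt⁆⁻¹ := by
    apply Subtype.ext
    push_cast
    exact hidPSL
  have hr6 : r ^ 6 = 1 := by
    rw [hr, ← QuotientGroup.mk_pow]
    exact (QuotientGroup.eq_one_iff _).mpr hR6
  have hrr6 : rr ^ 6 = 1 := by
    apply Subtype.ext
    push_cast
    exact hr6
  -- abelianization
  set x : Abelianization ↥G := Abelianization.of rr with hx
  have hx6 : x ^ 6 = 1 := by rw [hx, ← map_pow, hrr6, _root_.map_one]
  have hxt : Abelianization.of tt = 1 := by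
    rw [hid, _root_.map_mul, map_inv, map_commutatorElement, map_commutatorElement,
      commutatorElement_eq_one_iff_mul_comm.mpr (mul_comm _ _),
      commutatorElement_eq_one_iff_mul_comm.mpr (mul_comm _ _)]
    simp
  -- the homomorphism to ℂˣ
  have hψx : ((Abelianization.lift (Fhom G hGP) x : ℂˣ) : ℂ) = ℓ ^ 2 := by
    rw [hx, Abelianization.lift_apply_of, Fhom_val]
    show Stmt8Aux.sq (r : PSL(2, ℂ)) = ℓ ^ 2
    rw [hr, sq_mk, hR]
    norm_num
  -- generation: closure {x} = ⊤
  have hofsurj : Function.Surjective (Abelianization.of : ↥G → Abelianization ↥G) :=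
    fun y => Quotient.inductionOn' y fun z => ⟨z, rfl⟩
  have hpre : (Subtype.val ⁻¹' ({t, r} : Set PSL(2, ℂ)) : Set ↥G) = {tt, rr} := by
    ext g
    simp [Set.mem_preimage, Subtype.ext_iff, htt, hrr]
  have htop : Subgroup.closure ({tt, rr} : Set ↥G) = ⊤ := by
    rw [← hpre]; exact Subgroup.closure_closure_coe_preimage
  have hgen : Subgroup.closure ({x} : Set (Abelianization ↥G)) = ⊤ := by
    have hmap : Subgroup.map Abelianization.of (⊤ : Subgroup ↥G) = ⊤ := by
      rw [← MonoidHom.range_eq_map]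
      exact MonoidHom.range_eq_top_of_surjective _ hofsurj
    calc Subgroup.closure ({x} : Set (Abelianization ↥G))
        = ⊥ ⊔ Subgroup.closure {x} := (bot_sup_eq _).symm
      _ = Subgroup.closure {1} ⊔ Subgroup.closure {x} := by rw [Subgroup.closure_singleton_one]
      _ = Subgroup.closure ({1} ∪ {x}) := (Subgroup.closure_union _ _).symm
      _ = Subgroup.closure {Abelianization.of tt, Abelianization.of rr} := by
          rw [hxt]; rfl
      _ = Subgroup.closure (Abelianization.of '' {tt, rr}) := by rw [Set.image_pair]
      _ = Subgroup.map Abelianization.of (Subgroup.closure {tt, rr}) :=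
          (MonoidHom.map_closure _ _).symm
      _ = ⊤ := by rw [htop, hmap]
  -- build φ : Multiplicative (ZMod 6) →* Abelianization ↥G
  let fZ : ℤ →+ Additive (Abelianization ↥G) :=
    { toFun := fun n => Additive.ofMul (x ^ n)
      map_zero' := by simp
      map_add' := by intro a b; simp [_root_.zpow_add] }
  have hf6 : fZ (6 : ℕ) = 0 := by
    show Additive.ofMul (x ^ ((6:ℕ) : ℤ)) = 0
    rw [zpow_natCast, hx6]; rfl
  let φ : Multiplicative (ZMod 6) →* Abelianization ↥G :=
    AddMonoidHom.toMultiplicativeLeft (ZMod.lift 6 ⟨fZ, hf6⟩)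
  have hφ : ∀ n : ℤ, φ (Multiplicative.ofAdd ((n : ZMod 6))) = x ^ n := by
    intro n
    show Additive.toMul ((ZMod.lift 6 ⟨fZ, hf6⟩) ((n : ℤ) : ZMod 6)) = x ^ n
    rw [ZMod.lift_coe]
    rfl
  -- injectivity
  have hinj : Function.Injective φ := by
    rw [injective_iff_map_eq_one]
    intro a ha
    set k : ZMod 6 := Multiplicative.toAdd a with hk
    have hcast : ((k.val : ℤ) : ZMod 6) = k := by
      push_cast
      exact ZMod.natCast_rightInverse k
    have hka : a = Multiplicative.ofAdd ((k.val : ℤ) : ZMod 6) := by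
      rw [hcast, hk]
      rfl
    rw [hka, hφ] at ha
    rw [zpow_natCast] at ha
    have h1 : ((Abelianization.lift (Fhom G hGP) (x ^ k.val) : ℂˣ) : ℂ) = 1 := by
      rw [ha, _root_.map_one, Units.val_one]
    have h2 : (ℓ ^ 2) ^ k.val = 1 := by
      rw [_root_.map_pow] at h1
      calc (ℓ ^ 2) ^ k.val
          = ((Abelianization.lift (Fhom G hGP) x : ℂˣ) : ℂ) ^ k.val := by rw [hψx]
        _ = ((Abelianization.lift (Fhom G hGP) x ^ k.val : ℂˣ) : ℂ) :=
            (Units.val_pow_eq_pow_val _ _).symm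
        _ = 1 := h1
    have hdvd : (6 : ℕ) ∣ k.val := by
      have := orderOf_dvd_of_pow_eq_one h2
      rwa [horder] at this
    have hk0 : k.val = 0 := Nat.eq_zero_of_dvd_of_lt hdvd (ZMod.val_lt k)
    rw [hka, hk0]
    rfl
  -- surjectivity
  have hsurj : Function.Surjective φ := by
    intro y
    have hy : y ∈ Subgroup.zpowers x := by
      rw [Subgroup.zpowers_eq_closure, hgen]; trivial
    obtain ⟨n, hn⟩ := Subgroup.mem_zpowers_iff.mp hy
    exact ⟨Multiplicative.ofAdd ((n : ZMod 6)), by rw [hφ]; exact hn⟩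
  exact ⟨(MulEquiv.ofBijective φ ⟨hinj, hsurj⟩).symm⟩
end
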